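/- Let f, g be functions smooth on ℝ \ {x₁,...,x_N}, meromorphic near each x_j, such that f·ḡ has zero residue at each x_j, and f·ḡ is integrable at infinity. Then the regularized pairing ⟨f,g⟩ = ∫_{⟨ℝ⟩} f(x) g(x̄)‾ dx, computed by deforming around each singularity into the upper half-plane, equals the value computed by deforming into the lower half-plane, and the pairing is Hermitian-symmetric: ⟨f,g⟩ = ⟨g,f⟩‾ when f, g take real-analytic meromorphic extensions with f(x̄) = f(x)‾. -/

import Mathlib

set_option maxHeartbeats 1000000

open MeasureTheory intervalIntegral

lemma reg_summable_norm {ε R : ℝ} (hε : 0 < ε) (hεR : ε < R)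
    (c : ℤ → ℂ) (M : ℕ) (hvan : ∀ k : ℤ, k < -(M : ℤ) → c k = 0)
    (r : ℝ) (hεr : ε < r)
    (hsum : Summable fun k : ℤ => c k * (r : ℂ) ^ k) :
    Summable fun k : ℤ => ‖c k‖ * ε ^ k := by
  have hrpos : 0 < r := lt_trans hε hεr
  -- positive part
  have hpos : Summable fun n : ℕ => ‖c (n : ℤ)‖ * ε ^ (n : ℤ) := by
    have h1 : Summable fun n : ℕ => c (n : ℤ) * ((r : ℂ)) ^ (n : ℤ) :=
      hsum.comp_injective (fun a b h => by exact_mod_cast h)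
    have h2 : Filter.Tendsto (fun n : ℕ => ‖c (n : ℤ) * ((r : ℂ)) ^ (n : ℤ)‖)
        Filter.atTop (nhds 0) := by
      simpa using h1.tendsto_atTop_zero.norm
    obtain ⟨B, hB⟩ := h2.bddAbove_range
    have hBmem : ∀ n : ℕ, ‖c (n : ℤ)‖ * r ^ n ≤ B := by
      intro n
      have := hB (Set.mem_range_self n)
      simpa [norm_mul, norm_zpow, abs_of_pos hrpos, zpow_natCast] using this
    have hgeom : Summable fun n : ℕ => B * (ε / r) ^ n :=
      (summable_geometric_of_lt_one (by positivity)
        (by rw [div_lt_one hrpos]; exact hεr)).mul_left B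
    refine Summable.of_nonneg_of_le (fun n => by positivity) (fun n => ?_) hgeom
    have hb := hBmem n
    have heq : ‖c (n : ℤ)‖ * ε ^ (n : ℤ) = (‖c (n : ℤ)‖ * r ^ n) * (ε / r) ^ n := by
      have hrn : (r : ℝ) ^ n ≠ 0 := by positivity
      rw [zpow_natCast, div_pow]
      field_simp
    rw [heq]
    exact mul_le_mul_of_nonneg_right hb (by positivity)
  have hneg : Summable fun n : ℕ => ‖c (-(n : ℤ))‖ * ε ^ (-(n : ℤ)) := by
    apply summable_of_ne_finset_zero (s := Finset.range (M + 1))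
    intro n hn
    have : c (-(n : ℤ)) = 0 := by
      apply hvan
      simp only [Finset.mem_range, not_lt] at hn
      omega
    simp [this]
  exact Summable.of_nat_of_neg hpos hneg

lemma reg_circle_integral_zero {ε R : ℝ} (hε : 0 < ε) (hεR : ε < R)
    (w : ℂ) (F : ℂ → ℂ) (c : ℤ → ℂ) (M : ℕ)
    (hvan : ∀ k : ℤ, k < -(M : ℤ) → c k = 0) (hc1 : c (-1) = 0)
    (hF : ∀ z : ℂ, z ≠ w → ‖z - w‖ < R →
      (Summable fun k : ℤ => c k * (z - w) ^ k) ∧ F z = ∑' k : ℤ, c k * (z - w) ^ k) :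
    (∫ θ in (0:ℝ)..(2*Real.pi), F (circleMap w ε θ) * (circleMap 0 ε θ * Complex.I)) = 0 := by
  have hπ : (0:ℝ) ≤ 2 * Real.pi := by positivity
  set r : ℝ := (ε + R) / 2 with hrdef
  have hεr : ε < r := by rw [hrdef]; linarith
  have hrR : r < R := by rw [hrdef]; linarith
  have hrpos : 0 < r := lt_trans hε hεr
  -- summability of coefficients at radius ε
  have hz1 : (w + (r:ℂ)) ≠ w := by
    simp [Complex.ofReal_ne_zero, ne_of_gt hrpos]
  have hz1n : ‖(w + (r:ℂ)) - w‖ < R := by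
    simp only [add_sub_cancel_left, Complex.norm_real, Real.norm_eq_abs,
      abs_of_pos hrpos]
    exact hrR
  have hsumr : Summable fun k : ℤ => c k * (r : ℂ) ^ k := by
    have := (hF (w + (r:ℂ)) hz1 hz1n).1
    simpa using this
  have hA : Summable fun k : ℤ => ‖c k‖ * ε ^ k :=
    reg_summable_norm hε hεR c M hvan r hεr hsumr
  -- the terms
  set h : ℤ → ℝ → ℂ :=
    fun k θ => c k * (circleMap 0 ε θ) ^ k * (circleMap 0 ε θ * Complex.I) with hhdef
  have hcm_ne : ∀ θ : ℝ, circleMap 0 ε θ ≠ 0 := by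
    intro θ
    have : ‖circleMap 0 ε θ‖ = ε := by
      rw [norm_circleMap_zero]; exact abs_of_pos hε
    intro h0
    rw [h0] at this; simp at this; linarith
  have hpt : ∀ θ : ℝ,
      F (circleMap w ε θ) * (circleMap 0 ε θ * Complex.I) = ∑' k : ℤ, h k θ := by
    intro θ
    have hne : circleMap w ε θ ≠ w := circleMap_ne_center (ne_of_gt hε)
    have hsub : circleMap w ε θ - w = circleMap 0 ε θ := circleMap_sub_center w ε θ
    have hnorm : ‖circleMap w ε θ - w‖ < R := by
      rw [hsub, norm_circleMap_zero, abs_of_pos hε]; exact hεR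
    have hFz := (hF (circleMap w ε θ) hne hnorm).2
    rw [hFz, ← tsum_mul_right]
    simp only [hhdef, hsub]
  have hcont : ∀ k : ℤ, Continuous (h k) := by
    intro k
    apply Continuous.mul ?_ (by continuity)
    apply Continuous.mul continuous_const
    apply continuous_iff_continuousAt.mpr
    intro θ
    exact (continuousAt_zpow₀ _ _ (Or.inl (hcm_ne θ))).comp
      (continuous_circleMap 0 ε).continuousAt
  have hInt : ∀ k : ℤ, Integrable (h k) (volume.restrict (Set.Ioc (0:ℝ) (2*Real.pi))) :=
    fun k => ((hcont k).integrableOn_Ioc)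
  have hnormval : ∀ k : ℤ, ∀ θ : ℝ, ‖h k θ‖ = ‖c k‖ * ε ^ k * ε := by
    intro k θ
    have hcm : ‖circleMap 0 ε θ‖ = ε := by
      rw [norm_circleMap_zero]; exact abs_of_pos hε
    simp [hhdef, norm_mul, norm_zpow, hcm, Complex.norm_I, abs_of_pos hε]
  have hsumnorm : Summable fun k : ℤ =>
      ∫ θ in Set.Ioc (0:ℝ) (2*Real.pi), ‖h k θ‖ := by
    have : ∀ k : ℤ, (∫ θ in Set.Ioc (0:ℝ) (2*Real.pi), ‖h k θ‖)
        = (2 * Real.pi) * (‖c k‖ * ε ^ k * ε) := by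
      intro k
      simp only [hnormval k]
      rw [setIntegral_const]
      simp [Real.volume_Ioc, ENNReal.toReal_ofReal hπ, Real.pi_pos.le]
    rw [funext this]
    have := (hA.mul_left (2 * Real.pi * ε))
    apply this.congr
    intro k; ring
  have hIzero : ∀ k : ℤ, (∫ θ in Set.Ioc (0:ℝ) (2*Real.pi), h k θ) = 0 := by
    intro k
    by_cases hk : k = -1
    · subst hk
      simp [hhdef, hc1]
    · rw [← integral_of_le hπ]
      have hcz := circleIntegral.integral_sub_zpow_of_ne hk 0 0 ε
      simp only [circleIntegral, deriv_circleMap, sub_zero, smul_eq_mul] at hcz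
      calc (∫ θ in (0:ℝ)..(2*Real.pi), h k θ)
          = ∫ θ in (0:ℝ)..(2*Real.pi),
              c k * (circleMap 0 ε θ * Complex.I * (circleMap 0 ε θ) ^ k) := by
            apply intervalIntegral.integral_congr
            intro θ _; simp only [hhdef]; ring
        _ = c k * ∫ θ in (0:ℝ)..(2*Real.pi),
              circleMap 0 ε θ * Complex.I * (circleMap 0 ε θ) ^ k :=
            intervalIntegral.integral_const_mul _ _
        _ = 0 := by rw [hcz, mul_zero]
  rw [integral_of_le hπ]
  calc (∫ θ in Set.Ioc (0:ℝ) (2*Real.pi),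
          F (circleMap w ε θ) * (circleMap 0 ε θ * Complex.I))
      = ∫ θ in Set.Ioc (0:ℝ) (2*Real.pi), ∑' k : ℤ, h k θ := by
        apply setIntegral_congr_fun measurableSet_Ioc
        intro θ _; exact hpt θ
    _ = ∑' k : ℤ, ∫ θ in Set.Ioc (0:ℝ) (2*Real.pi), h k θ :=
        (integral_tsum_of_summable_integral_norm hInt hsumnorm).symm
    _ = 0 := by simp [hIzero]

lemma reg_conj_intervalIntegral (f : ℝ → ℂ) (a b : ℝ) :
    (∫ x in a..b, (starRingEnd ℂ) (f x)) = (starRingEnd ℂ) (∫ x in a..b, f x) := by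
  simp only [intervalIntegral, integral_conj]
  rw [← map_sub]

lemma reg_conj_circleMap (a ε θ : ℝ) :
    (starRingEnd ℂ) (circleMap (a : ℂ) ε θ) = circleMap (a : ℂ) ε (-θ) := by
  simp only [circleMap, map_add, map_mul, Complex.conj_ofReal, ← Complex.exp_conj,
    Complex.conj_I]
  rw [show (θ:ℂ) * -Complex.I = ((-θ : ℝ) : ℂ) * Complex.I by push_cast; ring]

/-- Regularized indefinite inner product `⟨f,g⟩ = ∫_{⟨ℝ⟩} f(x) conj(g(x̄)) dx`:
`f, g` are smooth on `ℝ \ {x₁, …, x_N}`, meromorphic near each `x_j` (with real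
symmetry `f(z̄) = conj f(z)`), the product `F(z) = f(z)·conj(g(z̄))` has zero residue
at each `x_j`, and `F` is integrable at infinity.  Then the value obtained by
deforming the real line around each singularity into the upper half-plane
(`θ : π → 0`) equals the one through the lower half-plane (`θ : π → 2π`), and the
pairing is Hermitian-symmetric: `⟨f,g⟩ = conj ⟨g,f⟩`. -/
theorem regularized_pairing_well_defined_and_hermitian
    (N : ℕ) (x : Fin N → ℝ) (ε R : ℝ) (hε : 0 < ε) (hεR : ε < R)
    (hsep : ∀ i j : Fin N, i ≠ j → 2 * R < |x i - x j|)
    (f g : ℂ → ℂ)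
    (hfa : AnalyticOnNhd ℂ f {z : ℂ | ∀ j, z ≠ (x j : ℂ)})
    (hga : AnalyticOnNhd ℂ g {z : ℂ | ∀ j, z ≠ (x j : ℂ)})
    (hfsym : ∀ z, f ((starRingEnd ℂ) z) = (starRingEnd ℂ) (f z))
    (hgsym : ∀ z, g ((starRingEnd ℂ) z) = (starRingEnd ℂ) (g z))
    (F G : ℂ → ℂ)
    (hFdef : ∀ z, F z = f z * (starRingEnd ℂ) (g ((starRingEnd ℂ) z)))
    (hGdef : ∀ z, G z = g z * (starRingEnd ℂ) (f ((starRingEnd ℂ) z)))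
    (hres : ∀ j : Fin N, ∃ (c : ℤ → ℂ) (M : ℕ), (∀ k : ℤ, k < -(M : ℤ) → c k = 0) ∧
      c (-1) = 0 ∧
      ∀ z : ℂ, z ≠ (x j : ℂ) → ‖z - (x j : ℂ)‖ < R →
        (Summable fun k : ℤ => c k * (z - (x j : ℂ)) ^ k) ∧
        F z = ∑' k : ℤ, c k * (z - (x j : ℂ)) ^ k)
    (hint : IntegrableOn (fun t : ℝ => F (t : ℂ)) {t : ℝ | ∀ j, ε ≤ |t - x j|}) :
    ((∫ t in {t : ℝ | ∀ j, ε ≤ |t - x j|}, F (t : ℂ))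
        + ∑ j : Fin N, ∫ θ in Real.pi..0,
            F (circleMap (x j : ℂ) ε θ) * (circleMap 0 ε θ * Complex.I)
      = (∫ t in {t : ℝ | ∀ j, ε ≤ |t - x j|}, F (t : ℂ))
        + ∑ j : Fin N, ∫ θ in Real.pi..(2 * Real.pi),
            F (circleMap (x j : ℂ) ε θ) * (circleMap 0 ε θ * Complex.I))
    ∧ ((∫ t in {t : ℝ | ∀ j, ε ≤ |t - x j|}, F (t : ℂ))
        + ∑ j : Fin N, ∫ θ in Real.pi..0,
            F (circleMap (x j : ℂ) ε θ) * (circleMap 0 ε θ * Complex.I)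
      = (starRingEnd ℂ) ((∫ t in {t : ℝ | ∀ j, ε ≤ |t - x j|}, G (t : ℂ))
        + ∑ j : Fin N, ∫ θ in Real.pi..0,
            G (circleMap (x j : ℂ) ε θ) * (circleMap 0 ε θ * Complex.I))) := by
  -- membership of circle points in the domain of analyticity
  have hmemA : ∀ j : Fin N, ∀ z : ℂ, ‖z - (x j : ℂ)‖ = ε →
      ∀ k, z ≠ (x k : ℂ) := by
    intro j z habs k hzk
    rw [hzk] at habs
    have hcast : ((x k : ℂ) - (x j : ℂ)) = ((x k - x j : ℝ) : ℂ) := by push_cast; ring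
    rw [hcast, Complex.norm_real, Real.norm_eq_abs] at habs
    by_cases hkj : k = j
    · subst hkj; simp at habs; linarith
    · have := hsep k j hkj; linarith
  have habs_cm : ∀ j : Fin N, ∀ θ : ℝ,
      ‖circleMap (x j : ℂ) ε θ - (x j : ℂ)‖ = ε := by
    intro j θ
    rw [circleMap_sub_center, norm_circleMap_zero, abs_of_pos hε]
  -- continuity of the arc integrand for F
  have hKcont : ∀ j : Fin N, Continuous (fun θ : ℝ =>
      F (circleMap (x j : ℂ) ε θ) * (circleMap 0 ε θ * Complex.I)) := by
    intro j
    have hcf : Continuous fun θ : ℝ => f (circleMap (x j : ℂ) ε θ) := by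
      apply continuous_iff_continuousAt.mpr
      intro θ
      exact ((hfa _ (hmemA j _ (habs_cm j θ))).continuousAt).comp
        (continuous_circleMap _ _).continuousAt
    have hcg : Continuous fun θ : ℝ =>
        g ((starRingEnd ℂ) (circleMap (x j : ℂ) ε θ)) := by
      apply continuous_iff_continuousAt.mpr
      intro θ
      have hcz : ∀ k, (starRingEnd ℂ) (circleMap (x j : ℂ) ε θ) ≠ (x k : ℂ) := by
        apply hmemA j
        have heq : (starRingEnd ℂ) (circleMap (x j : ℂ) ε θ) - (x j : ℂ)
            = (starRingEnd ℂ) (circleMap (x j : ℂ) ε θ - (x j : ℂ)) := by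
          rw [map_sub, Complex.conj_ofReal]
        rw [heq, Complex.norm_conj]
        exact habs_cm j θ
      have h5 : ContinuousAt (g ∘ (⇑(starRingEnd ℂ)) ∘ circleMap ((x j : ℝ) : ℂ) ε) θ :=
        ((hga _ hcz).continuousAt.comp Complex.continuous_conj.continuousAt).comp
          (continuous_circleMap _ _).continuousAt
      exact h5
    have heq2 : (fun θ : ℝ => F (circleMap (x j : ℂ) ε θ) * (circleMap 0 ε θ * Complex.I))
        = fun θ : ℝ => (f (circleMap (x j : ℂ) ε θ)
            * (starRingEnd ℂ) (g ((starRingEnd ℂ) (circleMap (x j : ℂ) ε θ))))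
            * (circleMap 0 ε θ * Complex.I) := by
      funext θ
      rw [hFdef]
    rw [heq2]
    exact (hcf.mul (Complex.continuous_conj.comp hcg)).mul
      ((continuous_circleMap 0 ε).mul continuous_const)
  -- part 1, per j
  have harc : ∀ j : Fin N,
      (∫ θ in Real.pi..0, F (circleMap (x j : ℂ) ε θ) * (circleMap 0 ε θ * Complex.I))
      = ∫ θ in Real.pi..(2 * Real.pi),
          F (circleMap (x j : ℂ) ε θ) * (circleMap 0 ε θ * Complex.I) := by
    intro j
    obtain ⟨c, M, hvan, hc1, hFs⟩ := hres j
    have htot := reg_circle_integral_zero hε hεR ((x j : ℂ)) F c M hvan hc1 hFs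
    have hii : ∀ a b : ℝ, IntervalIntegrable (fun θ : ℝ =>
        F (circleMap (x j : ℂ) ε θ) * (circleMap 0 ε θ * Complex.I)) volume a b :=
      fun a b => (hKcont j).intervalIntegrable a b
    have hadd := intervalIntegral.integral_add_adjacent_intervals
      (hii 0 Real.pi) (hii Real.pi (2 * Real.pi))
    have hsum0 := hadd.trans htot
    rw [intervalIntegral.integral_symm 0 Real.pi]
    linear_combination -hsum0
  refine ⟨?_, ?_⟩
  · congr 1
    exact Finset.sum_congr rfl fun j _ => harc j
  · -- Hermitian symmetry
    rw [map_add, map_sum]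
    congr 1
    · -- line part
      have hptline : (fun t : ℝ => F (t : ℂ)) = fun t : ℝ => (starRingEnd ℂ) (G (t : ℂ)) := by
        funext t
        rw [hFdef, hGdef, map_mul, Complex.conj_ofReal, Complex.conj_conj]
        ring
      rw [hptline, integral_conj]
    · refine Finset.sum_congr rfl fun j _ => ?_
      -- arc part
      set K : ℝ → ℂ := fun θ =>
        F (circleMap (x j : ℂ) ε θ) * (circleMap 0 ε θ * Complex.I) with hK
      have hpt : ∀ θ : ℝ,
          (starRingEnd ℂ) (G (circleMap (x j : ℂ) ε θ) * (circleMap 0 ε θ * Complex.I))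
          = -(K (-θ)) := by
        intro θ
        have h1 : (starRingEnd ℂ) (circleMap (x j : ℂ) ε θ)
            = circleMap (x j : ℂ) ε (-θ) := reg_conj_circleMap _ _ _
        have h2 : (starRingEnd ℂ) (circleMap 0 ε θ * Complex.I)
            = -(circleMap 0 ε (-θ) * Complex.I) := by
          have h0 : (starRingEnd ℂ) (circleMap (0:ℂ) ε θ) = circleMap (0:ℂ) ε (-θ) := by
            have := reg_conj_circleMap 0 ε θ
            simpa using this
          rw [map_mul, h0, Complex.conj_I]
          ring
        have h3 : (starRingEnd ℂ) (G (circleMap (x j : ℂ) ε θ))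
            = F (circleMap (x j : ℂ) ε (-θ)) := by
          rw [← h1]
          simp only [hGdef, hFdef, map_mul, Complex.conj_conj]
          ring
        rw [map_mul, h2, h3]
        simp only [hK]
        ring
      symm
      calc (starRingEnd ℂ)
            (∫ θ in Real.pi..0, G (circleMap (x j : ℂ) ε θ) * (circleMap 0 ε θ * Complex.I))
          = ∫ θ in Real.pi..0,
              (starRingEnd ℂ) (G (circleMap (x j : ℂ) ε θ) * (circleMap 0 ε θ * Complex.I)) :=
            (reg_conj_intervalIntegral _ _ _).symm
        _ = ∫ θ in Real.pi..0, -(K (-θ)) := by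
            apply intervalIntegral.integral_congr
            intro θ _; exact hpt θ
        _ = -(∫ θ in Real.pi..0, K (-θ)) := intervalIntegral.integral_neg
        _ = -(∫ θ in (-(0:ℝ))..(-Real.pi), K θ) := by
            rw [intervalIntegral.integral_comp_neg]
        _ = ∫ θ in (-Real.pi)..(-(0:ℝ)), K θ := by
            rw [intervalIntegral.integral_symm (-Real.pi) (-(0:ℝ)), neg_neg]
        _ = ∫ θ in (-Real.pi)..(0:ℝ), K θ := by norm_num
        _ = ∫ θ in (-Real.pi)..(0:ℝ), K (θ + 2 * Real.pi) := by
            apply intervalIntegral.integral_congr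
            intro θ _
            simp only [hK, (periodic_circleMap ((x j : ℝ) : ℂ) ε) θ,
              (periodic_circleMap (0 : ℂ) ε) θ]
        _ = ∫ θ in (-Real.pi + 2 * Real.pi)..((0:ℝ) + 2 * Real.pi), K θ :=
            intervalIntegral.integral_comp_add_right _ _
        _ = ∫ θ in Real.pi..(2 * Real.pi), K θ := by
            have h4 : -Real.pi + 2 * Real.pi = Real.pi := by ring
            rw [h4, zero_add]
        _ = ∫ θ in Real.pi..0, K θ := (harc j).symm
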